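/- Let M be a loopless matroid on E, m ≥ 1, and Q = Q_m(M) with tip a. If C is a circuit of Q with C ⊄ E, then a ∈ cl_Q(C). -/

import Mathlib

open Set Matroid

namespace ConePaper

variable {α : Type*}

/-- The rank of a set in a matroid: the supremum of sizes of independent subsets. -/
noncomputable def rk (M : Matroid α) (X : Set α) : ℕ :=
  sSup {n : ℕ | ∃ I, M.Indep I ∧ I ⊆ X ∧ I.ncard = n}

/-- A loopless matroid: every singleton of the ground set is independent. -/
def Loopless (M : Matroid α) : Prop := ∀ e ∈ M.E, M.Indep {e}

/-- A coloop: an element of the ground set lying in every base. -/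
def IsColoop (M : Matroid α) (e : α) : Prop := e ∈ M.E ∧ ∀ B, M.IsBase B → e ∈ B

/-- A circuit: a minimal dependent set. -/
def IsCircuit (M : Matroid α) (C : Set α) : Prop :=
  C ⊆ M.E ∧ ¬ M.Indep C ∧ ∀ x ∈ C, M.Indep (C \ {x})

/-- A cyclic flat: a flat whose restriction has no coloops. -/
def CyclicFlat (M : Matroid α) (F : Set α) : Prop :=
  M.IsFlat F ∧ ∀ e ∈ F, ¬ IsColoop (M ↾ F) e

/-- Deletion of a set from a matroid. -/
def mdel (M : Matroid α) (X : Set α) : Matroid α := M ↾ (M.E \ X)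

/-- The cone `q(S) = S ∪ {a} ∪ ⋃_{e ∈ S} T e`. -/
def cone (T : α → Set α) (a : α) (S : Set α) : Set α := S ∪ {a} ∪ ⋃ e ∈ S, T e

/-- The projection `p(S) = (S ∩ E) ∪ {e ∈ E : S ∩ T e ≠ ∅}`. -/
def proj (E : Set α) (T : α → Set α) (S : Set α) : Set α :=
  (S ∩ E) ∪ {e ∈ E | (S ∩ T e).Nonempty}

/-- `FreeCone M Q T a m` says that `Q` is the free `m`-cone of the loopless
matroid `M`, with extra points `T e` (of size `m`) for `e ∈ M.E` and tip `a`: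
its cyclic flats are those of `M` (with the same rank) together with the cones
of nonempty flats of `M` (with rank one greater). -/
structure FreeCone (M Q : Matroid α) (T : α → Set α) (a : α) (m : ℕ) : Prop where
  hm : 1 ≤ m
  hMfin : M.E.Finite
  hloopless : Loopless M
  hTfin : ∀ e ∈ M.E, (T e).Finite
  hTcard : ∀ e ∈ M.E, (T e).ncard = m
  hTdisjE : ∀ e ∈ M.E, Disjoint (T e) M.E
  hTdisj : ∀ e ∈ M.E, ∀ f ∈ M.E, e ≠ f → Disjoint (T e) (T f)
  ha : a ∉ M.E ∪ ⋃ e ∈ M.E, T e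
  hQE : Q.E = M.E ∪ (⋃ e ∈ M.E, T e) ∪ {a}
  hcyclic : ∀ F, CyclicFlat Q F ↔
      (CyclicFlat M F ∨ ∃ F', M.IsFlat F' ∧ F'.Nonempty ∧ F = cone T a F')
  hrank1 : ∀ F, CyclicFlat M F → rk Q F = rk M F
  hrank2 : ∀ F', M.IsFlat F' → F'.Nonempty → rk Q (cone T a F') = rk M F' + 1

/-- A flag of a rank-`k` matroid: a chain of flats, one of each rank `0,…,k`. -/
def IsFlag (N : Matroid α) (k : ℕ) (X : ℕ → Set α) : Prop :=
  (∀ i ≤ k, N.IsFlat (X i) ∧ rk N (X i) = i) ∧ ∀ i < k, X i ⊂ X (i + 1)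


lemma flat_closure (M : Matroid α) (X : Set α) : M.IsFlat (M.closure X) := by
  rw [Matroid.closure_def, sInter_eq_iInter]
  have : Nonempty {F // F ∈ {F | M.IsFlat F ∧ X ∩ M.E ⊆ F}} :=
    ⟨⟨M.E, M.ground_isFlat, inter_subset_right⟩⟩
  exact Matroid.IsFlat.iInter fun i ↦ i.2.1

lemma not_coloop_of_mem_closure {Q : Matroid α} {F I : Set α} {e : α}
    (hI : Q.Indep I) (hIF : I ⊆ F) (he : e ∈ Q.closure I) (heI : e ∉ I) :
    ¬ IsColoop (Q ↾ F) e := by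
  intro hco
  have hIr : (Q ↾ F).Indep I := Matroid.restrict_indep_iff.2 ⟨hI, hIF⟩
  obtain ⟨B, hB, hIB⟩ := hIr.exists_isBase_superset
  have heB := hco.2 B hB
  have hins : (Q ↾ F).Indep (insert e I) := hB.indep.subset (insert_subset heB hIB)
  rcases hI.insert_indep_iff.1 (Matroid.restrict_indep_iff.1 hins).1 with h | h
  · exact h.2 he
  · exact heI h

/-- Any circuit of the free `m`-cone not contained in `E` has the tip in its closure. -/
theorem tip_mem_closure_circuit {M Q : Matroid α} {T : α → Set α} {a : α} {m : ℕ}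
    (hFC : FreeCone M Q T a m) (C : Set α) (hC : IsCircuit Q C) (hCE : ¬ C ⊆ M.E) :
    a ∈ Q.closure C := by
  set F := Q.closure C with hFdef
  have hCE' : C ⊆ Q.E := hC.1
  have hCF : C ⊆ F := Q.subset_closure C hCE'
  have hFflat : Q.IsFlat F := flat_closure Q C
  have hcf : CyclicFlat Q F := by
    refine ⟨hFflat, fun e heF ↦ ?_⟩
    by_cases heC : e ∈ C
    · have hI : Q.Indep (C \ {e}) := hC.2.2 e heC
      have heI : e ∉ C \ {e} := fun h => h.2 rfl
      have he : e ∈ Q.closure (C \ {e}) := by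
        by_contra hne
        have h2 : Q.Indep (insert e (C \ {e})) :=
          hI.insert_indep_iff.2 (Or.inl ⟨hCE' heC, hne⟩)
        rw [insert_diff_singleton, insert_eq_of_mem heC] at h2
        exact hC.2.1 h2
      exact not_coloop_of_mem_closure hI (diff_subset.trans hCF) he heI
    · obtain ⟨I, hI⟩ := Q.exists_isBasis C hCE'
      have hcl : Q.closure I = F := hI.closure_eq_closure
      have heI : e ∉ I := fun h => heC (hI.subset h)
      exact not_coloop_of_mem_closure hI.indep (hI.subset.trans hCF) (hcl ▸ heF) heI
  rcases (hFC.hcyclic F).1 hcf with h | ⟨F', _, _, hFeq⟩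
  · exact absurd (fun x hx => h.1.subset_ground (hCF hx)) hCE
  · show a ∈ F
    rw [hFeq]
    exact Or.inl (Or.inr rfl)
end ConePaper
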